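/- For D ≥ 4, the element [a, b] has infinite order in the triangle group Δ(D,D,D) = ⟨a, b | a^D = b^D = (ab)^D = 1⟩; consequently the subgroup generated by a^F and b^F is infinite for any F with 1 ≤ F < D dividing D. -/

import Mathlib

/-- Relations of the `(D,D,D)` von Dyck triangle group
`Δ(D,D,D) = ⟨a, b | a^D = b^D = (ab)^D = 1⟩` on generators `a = 0`, `b = 1`. -/
def triRels (D : ℕ) : Set (FreeGroup (Fin 2)) :=
  {FreeGroup.of 0 ^ D, FreeGroup.of 1 ^ D, (FreeGroup.of 0 * FreeGroup.of 1) ^ D}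

/-- The `(D,D,D)` triangle group. -/
abbrev TriangleDDD (D : ℕ) := PresentedGroup (triRels D)

open scoped commutatorElement

noncomputable section TriAux

open Complex Finset

/-- Upper triangular `2 × 2` matrix `[[g, t], [0, 1]]`. -/
def tm (g t : ℂ) : Matrix (Fin 2) (Fin 2) ℂ := !![g, t; 0, 1]

lemma tm_mul (g t h s : ℂ) : tm g t * tm h s = tm (g * h) (g * s + t) := by
  simp [tm, Matrix.mul_fin_two]

lemma tm_one : tm 1 0 = 1 := by
  simp [tm, Matrix.one_fin_two]

lemma tm_congr {g t g' t' : ℂ} (hg : g = g') (ht : t = t') : tm g t = tm g' t' := by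
  rw [hg, ht]

lemma tm_pow (g t : ℂ) (n : ℕ) :
    (tm g t) ^ n = tm (g ^ n) ((∑ k ∈ range n, g ^ k) * t) := by
  induction n with
  | zero => simp [tm_one]
  | succ n ih =>
      rw [pow_succ, ih, tm_mul, Finset.sum_range_succ,
        show g ^ n * t + (∑ k ∈ range n, g ^ k) * t
          = ((∑ k ∈ range n, g ^ k) + g ^ n) * t from by ring]
      exact tm_congr (pow_succ g n).symm rfl

lemma tm_inj {g t g' t' : ℂ} (h : tm g t = tm g' t') : g = g' ∧ t = t' := by
  constructor
  · have := congrArg (fun M => M 0 0) h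
    simpa [tm] using this
  · have := congrArg (fun M => M 0 1) h
    simpa [tm] using this

/-- The unit of `Matrix (Fin 2) (Fin 2) ℂ` given by `tm g t` for `g ≠ 0`. -/
def tu (g t : ℂ) (hg : g ≠ 0) : (Matrix (Fin 2) (Fin 2) ℂ)ˣ :=
  ⟨tm g t, tm g⁻¹ (-(g⁻¹ * t)),
    by rw [tm_mul, mul_inv_cancel₀ hg, show g * -(g⁻¹ * t) + t = 0 by field_simp; ring, tm_one],
    by rw [tm_mul, inv_mul_cancel₀ hg, show g⁻¹ * t + -(g⁻¹ * t) = 0 by ring, tm_one]⟩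

lemma tu_val (g t : ℂ) (hg : g ≠ 0) : (tu g t hg).val = tm g t := rfl

lemma tu_inv_val (g t : ℂ) (hg : g ≠ 0) : ((tu g t hg)⁻¹).val = tm g⁻¹ (-(g⁻¹ * t)) := rfl

lemma not_isOfFinOrder_of_tm (w : (Matrix (Fin 2) (Fin 2) ℂ)ˣ) (c : ℂ)
    (hw : w.val = tm 1 c) (hne : w ≠ 1) : ¬ IsOfFinOrder w := by
  have hc : c ≠ 0 := by
    intro h0
    apply hne
    apply Units.ext
    rw [hw, h0, tm_one, Units.val_one]
  intro h
  obtain ⟨n, hn, hwn⟩ := isOfFinOrder_iff_pow_eq_one.1 h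
  have hval : (w.val) ^ n = 1 := by
    rw [← Units.val_pow_eq_pow_val, hwn, Units.val_one]
  rw [hw, tm_pow, one_pow] at hval
  have hsum : (∑ k ∈ range n, (1 : ℂ) ^ k) = (n : ℂ) := by simp
  rw [hsum, ← tm_one] at hval
  obtain ⟨-, h2⟩ := tm_inj hval
  have : (n : ℂ) = 0 := by
    rcases mul_eq_zero.1 h2 with h | h
    · exact h
    · exact absurd h hc
  have : n = 0 := by exact_mod_cast this
  omega

end TriAux

section Main

open Complex Finset

variable {D : ℕ}

private lemma zeta_pow_D (hD : 4 ≤ D) : (Complex.exp (2 * Real.pi * Complex.I / D)) ^ D = 1 := by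
  have hD0 : (D : ℂ) ≠ 0 := Nat.cast_ne_zero.mpr (by omega)
  rw [← Complex.exp_nat_mul]
  rw [show (D : ℂ) * (2 * Real.pi * Complex.I / D) = 2 * Real.pi * Complex.I by field_simp]
  exact Complex.exp_two_pi_mul_I

private lemma zeta_pow_ne_one (hD : 4 ≤ D) {k : ℕ} (hk0 : 0 < k) (hkD : k < D) :
    (Complex.exp (2 * Real.pi * Complex.I / D)) ^ k ≠ 1 := by
  have hD0 : (D : ℂ) ≠ 0 := Nat.cast_ne_zero.mpr (by omega)
  rw [← Complex.exp_nat_mul]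
  intro h
  rw [Complex.exp_eq_one_iff] at h
  obtain ⟨n, hn⟩ := h
  have hπ : (Real.pi : ℂ) ≠ 0 := by exact_mod_cast Real.pi_ne_zero
  have hI : Complex.I ≠ 0 := Complex.I_ne_zero
  have hk : (k : ℂ) = n * D := by
    field_simp at hn
    have h2 : (2 : ℂ) * Real.pi * Complex.I ≠ 0 :=
      mul_ne_zero (mul_ne_zero two_ne_zero hπ) hI
    exact mul_right_cancel₀ h2 (by linear_combination (2 * Real.pi * Complex.I) * hn)
  have hkz : (k : ℤ) = n * D := by exact_mod_cast hk
  have hDz : (0 : ℤ) < (D : ℤ) := by exact_mod_cast (by omega : 0 < D)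
  rcases le_or_gt n 0 with h | h
  · have : n * (D : ℤ) ≤ 0 := mul_nonpos_of_nonpos_of_nonneg h hDz.le
    omega
  · have h1 : (1 : ℤ) ≤ n := h
    have : (D : ℤ) ≤ n * D := le_mul_of_one_le_left hDz.le h1
    omega

/-- For `D ≥ 4`, `[a,b]` has infinite order in `Δ(D,D,D)`, and consequently the
subgroup generated by `a^F` and `b^F` is infinite for any `1 ≤ F < D` dividing `D`. -/
theorem commutator_infinite_order_triangleDDD (D : ℕ) (hD : 4 ≤ D)
    (a b : TriangleDDD D) (ha : a = PresentedGroup.of 0) (hb : b = PresentedGroup.of 1) :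
    ¬ IsOfFinOrder ⁅a, b⁆ ∧
    ∀ F : ℕ, 1 ≤ F → F < D → F ∣ D →
      ((Subgroup.closure {a ^ F, b ^ F} : Subgroup (TriangleDDD D)) :
        Set (TriangleDDD D)).Infinite := by
  subst ha hb
  set z : ℂ := Complex.exp (2 * Real.pi * Complex.I / D) with hz_def
  have hz0 : z ≠ 0 := Complex.exp_ne_zero _
  have hzD : z ^ D = 1 := zeta_pow_D hD
  have hz1 : z ≠ 1 := by
    have := zeta_pow_ne_one hD (k := 1) one_pos (by omega)
    simpa using this
  have hz2 : z ^ 2 ≠ 1 := zeta_pow_ne_one hD (by omega) (by omega)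
  -- the representation
  set A : (Matrix (Fin 2) (Fin 2) ℂ)ˣ := tu z 0 hz0 with hA_def
  set B : (Matrix (Fin 2) (Fin 2) ℂ)ˣ := tu z 1 hz0 with hB_def
  have hApow : ∀ n : ℕ, (A ^ n).val = tm (z ^ n) 0 := by
    intro n
    rw [Units.val_pow_eq_pow_val, hA_def, tu_val, tm_pow, mul_zero]
  have hBpow : ∀ n : ℕ, (B ^ n).val = tm (z ^ n) (∑ k ∈ range n, z ^ k) := by
    intro n
    rw [Units.val_pow_eq_pow_val, hB_def, tu_val, tm_pow, mul_one]
  have hAinvpow : ∀ n : ℕ, ((A ^ n)⁻¹).val = tm (z ^ n)⁻¹ 0 := by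
    intro n
    rw [← inv_pow, Units.val_pow_eq_pow_val, hA_def, tu_inv_val, tm_pow, ← inv_pow]
    simp
  have hBinvpow : ∀ n : ℕ, ((B ^ n)⁻¹).val =
      tm (z ^ n)⁻¹ ((∑ k ∈ range n, (z⁻¹) ^ k) * (-(z⁻¹ * 1))) := by
    intro n
    rw [← inv_pow, Units.val_pow_eq_pow_val, hB_def, tu_inv_val, tm_pow, ← inv_pow]
  -- the key commutator computation
  have key : ∀ F : ℕ, 1 ≤ F → F < D → ¬ IsOfFinOrder ⁅A ^ F, B ^ F⁆ := by
    intro F hF1 hFD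
    have hgF : z ^ F ≠ 1 := zeta_pow_ne_one hD (by omega) hFD
    have hgF0 : z ^ F ≠ 0 := pow_ne_zero _ hz0
    obtain ⟨s, hsv, hs⟩ : ∃ s, ((B ^ F).val = tm (z ^ F) s) ∧ s ≠ 0 := by
      refine ⟨_, hBpow F, ?_⟩
      rw [geom_sum_eq hz1]
      exact div_ne_zero (sub_ne_zero.2 hgF) (sub_ne_zero.2 hz1)
    obtain ⟨t', ht'⟩ : ∃ t', ((B ^ F)⁻¹).val = tm (z ^ F)⁻¹ t' := ⟨_, hBinvpow F⟩
    have hval : (⁅A ^ F, B ^ F⁆ : (Matrix (Fin 2) (Fin 2) ℂ)ˣ).val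
        = tm 1 (z ^ F * t' + z ^ F * s) := by
      rw [commutatorElement_def, Units.val_mul, Units.val_mul, Units.val_mul,
        hApow, hsv, hAinvpow, ht', tm_mul, tm_mul, tm_mul]
      refine tm_congr ?_ ?_
      · field_simp
      · field_simp
        try ring
    have hne : (⁅A ^ F, B ^ F⁆ : (Matrix (Fin 2) (Fin 2) ℂ)ˣ) ≠ 1 := by
      rw [Ne, commutatorElement_eq_one_iff_mul_comm]
      intro hcomm
      have hcv := congrArg Units.val hcomm
      rw [Units.val_mul, Units.val_mul, hApow, hsv, tm_mul, tm_mul] at hcv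
      obtain ⟨-, h2⟩ := tm_inj hcv
      have hzero : (z ^ F - 1) * s = 0 := by linear_combination h2
      rcases mul_eq_zero.1 hzero with h | h
      · exact hgF (sub_eq_zero.mp h)
      · exact hs h
    exact not_isOfFinOrder_of_tm _ _ hval hne
  -- the homomorphism
  have hrel : ∀ r ∈ triRels D, FreeGroup.lift (![A, B] : Fin 2 → _) r = 1 := by
    intro r hr
    have hA1 : A ^ D = 1 := by
      apply Units.ext
      rw [hApow, hzD, tm_one, Units.val_one]
    have hB1 : B ^ D = 1 := by
      apply Units.ext
      rw [hBpow, hzD, Units.val_one, geom_sum_eq hz1, hzD, sub_self, zero_div, tm_one]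
    have hAB1 : (A * B) ^ D = 1 := by
      apply Units.ext
      rw [Units.val_pow_eq_pow_val, Units.val_mul, hA_def, hB_def, tu_val, tu_val, tm_mul,
        Units.val_one]
      have : z * z = z ^ 2 := by ring
      rw [mul_one, add_zero, this, tm_pow, geom_sum_eq hz2, ← pow_mul]
      rw [show 2 * D = D * 2 by ring, pow_mul, hzD, one_pow, sub_self, zero_div, zero_mul,
        tm_one]
    rcases hr with hr | hr | hr <;> subst hr <;>
      simp [map_pow, map_mul, hA1, hB1, hAB1]
  set φ : TriangleDDD D →* (Matrix (Fin 2) (Fin 2) ℂ)ˣ := PresentedGroup.toGroup hrel with hφ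
  have hφa : φ (PresentedGroup.of 0) = A := by simp [hφ]
  have hφb : φ (PresentedGroup.of 1) = B := by simp [hφ]
  have hinf : ∀ F : ℕ, 1 ≤ F → F < D →
      ¬ IsOfFinOrder ⁅(PresentedGroup.of 0 : TriangleDDD D) ^ F, (PresentedGroup.of 1 : TriangleDDD D) ^ F⁆ := by
    intro F hF1 hFD h
    have := φ.isOfFinOrder h
    rw [map_commutatorElement, map_pow, map_pow, hφa, hφb] at this
    exact key F hF1 hFD this
  constructor
  · intro h
    have := hinf 1 le_rfl (by omega)
    simp only [pow_one] at this
    exact this h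
  · intro F hF1 hFD _
    set H : Subgroup (TriangleDDD D) :=
      Subgroup.closure {(PresentedGroup.of 0 : TriangleDDD D) ^ F, (PresentedGroup.of 1 : TriangleDDD D) ^ F}
    have h1 : (PresentedGroup.of 0 : TriangleDDD D) ^ F ∈ H :=
      Subgroup.subset_closure (by simp)
    have h2 : (PresentedGroup.of 1 : TriangleDDD D) ^ F ∈ H :=
      Subgroup.subset_closure (by simp)
    have hmem : ⁅(PresentedGroup.of 0 : TriangleDDD D) ^ F, (PresentedGroup.of 1 : TriangleDDD D) ^ F⁆ ∈ H := by
      rw [commutatorElement_def]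
      exact mul_mem (mul_mem (mul_mem h1 h2) (inv_mem h1)) (inv_mem h2)
    exact Set.infinite_of_injective_forall_mem
      (f := fun n : ℤ => ⁅(PresentedGroup.of 0 : TriangleDDD D) ^ F, (PresentedGroup.of 1 : TriangleDDD D) ^ F⁆ ^ n)
      (injective_zpow_iff_not_isOfFinOrder.mpr (hinf F hF1 hFD))
      (fun n => H.zpow_mem hmem n)

end Main
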